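/- Let F and G be sparseness measures with cost functions J_F and J_G on ℝⁿ, suppose F and G are non-decreasing on [0,∞) and the ratio t ↦ F(t)/G(t) is non-increasing on (0,∞), and let k ≥ 1. Then: (i) every linear subspace ν of ℝⁿ satisfying NSP at sparsity k for J_G also satisfies NSP at sparsity k for J_F; and (ii) every m×n real matrix A that satisfies RRC at sparsity k for J_G with some constant also satisfies RRC at sparsity k for J_F with some constant. -/

import Mathlib

set_option maxHeartbeats 1000000


noncomputable section

/-- `F : ℝ → ℝ` is a sparseness measure: nonnegative on `[0,∞)`,
vanishing exactly at `0`, and `F (|·|)` is subadditive on `ℝ`. -/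
def SparsenessMeasure (F : ℝ → ℝ) : Prop :=
  (∀ t : ℝ, 0 ≤ t → 0 ≤ F t) ∧
  (∀ t : ℝ, 0 ≤ t → (F t = 0 ↔ t = 0)) ∧
  (∀ x y : ℝ, F |x + y| ≤ F |x| + F |y|)

/-- The cost function `J(x) = ∑ i, F |x i|` on `ℝⁿ`. -/
def costJ {n : ℕ} (F : ℝ → ℝ) (x : EuclideanSpace ℝ (Fin n)) : ℝ :=
  ∑ i, F |x i|

/-- The restricted cost `J(x_T) = ∑ i ∈ T, F |x i|`. -/
def costJT {n : ℕ} (F : ℝ → ℝ) (T : Finset (Fin n)) (x : EuclideanSpace ℝ (Fin n)) : ℝ :=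
  ∑ i ∈ T, F |x i|

/-- `x` has at most `k` nonzero entries. -/
def Sparse {n : ℕ} (k : ℕ) (x : EuclideanSpace ℝ (Fin n)) : Prop :=
  ∃ T : Finset (Fin n), T.card ≤ k ∧ ∀ i ∉ T, x i = 0

/-- The matrix `A` acting as a continuous linear map between Euclidean spaces. -/
def mulVecCLM {m n : ℕ} (A : Matrix (Fin m) (Fin n) ℝ) :
    EuclideanSpace ℝ (Fin n) →L[ℝ] EuclideanSpace ℝ (Fin m) :=
  (((EuclideanSpace.equiv (Fin m) ℝ).symm : (Fin m → ℝ) →L[ℝ] EuclideanSpace ℝ (Fin m)).comp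
    (Matrix.mulVecLin A).toContinuousLinearMap).comp
    ((EuclideanSpace.equiv (Fin n) ℝ) : EuclideanSpace ℝ (Fin n) →L[ℝ] (Fin n → ℝ))

/-- `A` satisfies the robust recovery condition at sparsity `k` for the cost `J_F`
with constant `C`: for every `k`-sparse `x̄`, every `ε > 0`, every noise `v` with
`‖v‖ ≤ ε`, and every feasible `x̂` with `J(x̂) ≤ J(x̄)`, one has `‖x̄ - x̂‖ ≤ C ε`. -/
def RRC {m n : ℕ} (A : Matrix (Fin m) (Fin n) ℝ) (k : ℕ) (F : ℝ → ℝ) (C : ℝ) : Prop :=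
  ∀ xbar : EuclideanSpace ℝ (Fin n), Sparse k xbar →
    ∀ ε : ℝ, 0 < ε →
      ∀ v : EuclideanSpace ℝ (Fin m), ‖v‖ ≤ ε →
        ∀ xhat : EuclideanSpace ℝ (Fin n),
          ‖mulVecCLM A xhat - (mulVecCLM A xbar + v)‖ ≤ ε →
            costJ F xhat ≤ costJ F xbar → ‖xbar - xhat‖ ≤ C * ε

/-- The robust null space condition with parameter `d` for `(A, k, J_F)`. -/
def RNSP {m n : ℕ} (A : Matrix (Fin m) (Fin n) ℝ) (k : ℕ) (F : ℝ → ℝ) (d : ℝ) : Prop :=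
  ∀ z ∈ LinearMap.ker (mulVecCLM A : EuclideanSpace ℝ (Fin n) →ₗ[ℝ] EuclideanSpace ℝ (Fin m)), z ≠ 0 →
    ∀ η : EuclideanSpace ℝ (Fin n), ‖η‖ < d * ‖z‖ →
      ∀ T : Finset (Fin n), T.card ≤ k →
        costJT F T (z + η) < costJT F Tᶜ (z + η)

/-- The subspace `ν` satisfies the null space property at sparsity `k` for `J_F`. -/
def NSP {n : ℕ} (ν : Submodule ℝ (EuclideanSpace ℝ (Fin n))) (k : ℕ) (F : ℝ → ℝ) : Prop :=
  ∀ z ∈ ν, z ≠ 0 → ∀ T : Finset (Fin n), T.card ≤ k → costJT F T z < costJT F Tᶜ z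

/-- The orthogonal projection onto `ν`, as a continuous linear map `ℝⁿ → ℝⁿ`. -/
def projCLM {n : ℕ} (ν : Submodule ℝ (EuclideanSpace ℝ (Fin n))) :
    EuclideanSpace ℝ (Fin n) →L[ℝ] EuclideanSpace ℝ (Fin n) :=
  ν.subtypeL.comp ν.orthogonalProjectionOnto

lemma sm_zero {F : ℝ → ℝ} (hF : SparsenessMeasure F) : F 0 = 0 :=
  (hF.2.1 0 le_rfl).mpr rfl

lemma sm_pos {F : ℝ → ℝ} (hF : SparsenessMeasure F) {t : ℝ} (ht : 0 < t) : 0 < F t := by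
  rcases (hF.1 t ht.le).lt_or_eq with h | h
  · exact h
  · exact absurd ((hF.2.1 t ht.le).mp h.symm) (ne_of_gt ht)

lemma sm_nonneg {F : ℝ → ℝ} (hF : SparsenessMeasure F) (x : ℝ) : 0 ≤ F |x| :=
  hF.1 _ (abs_nonneg x)

lemma keyLemma {n : ℕ} {F G : ℝ → ℝ} (hF : SparsenessMeasure F) (hG : SparsenessMeasure G)
    (hFmono : ∀ s t : ℝ, 0 ≤ s → s ≤ t → F s ≤ F t)
    (hratio : ∀ s t : ℝ, 0 < s → s ≤ t → F t / G t ≤ F s / G s)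
    {k : ℕ} (hk : 1 ≤ k)
    (w : EuclideanSpace ℝ (Fin n))
    (hw : ∀ T : Finset (Fin n), T.card ≤ k → costJT G T w < costJT G Tᶜ w) :
    ∀ T : Finset (Fin n), T.card ≤ k → costJT F T w < costJT F Tᶜ w := by
  rcases Nat.eq_zero_or_pos n with rfl | hn
  · exfalso
    have := hw ∅ (Nat.zero_le k |>.trans_eq rfl |> fun _ => by simp) 
    simp [costJT] at this
  set m0 := min k n with hm0def
  have hm0n : m0 ≤ n := min_le_right _ _
  have hm0k : m0 ≤ k := min_le_left _ _
  have hm01 : 1 ≤ m0 := le_min hk hn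
  obtain ⟨T', hT'mem, hT'max⟩ := Finset.exists_max_image (Finset.univ.powersetCard m0)
    (fun T => ∑ i ∈ T, |w i|) (Finset.powersetCard_nonempty.mpr (by simpa using hm0n))
  have hT'card : T'.card = m0 := (Finset.mem_powersetCard.mp hT'mem).2
  have hexch : ∀ i ∈ T', ∀ j, j ∉ T' → |w j| ≤ |w i| := by
    intro i hi j hj
    have hjne : j ∉ T'.erase i := fun h => hj (Finset.mem_of_mem_erase h)
    have hT'' : insert j (T'.erase i) ∈ Finset.univ.powersetCard m0 := by
      rw [Finset.mem_powersetCard]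
      refine ⟨Finset.subset_univ _, ?_⟩
      rw [Finset.card_insert_of_notMem hjne, Finset.card_erase_of_mem hi, hT'card]
      omega
    have hle : ∑ x ∈ insert j (T'.erase i), |w x| ≤ ∑ x ∈ T', |w x| := hT'max _ hT''
    have h1 : ∑ x ∈ T'.erase i, |w x| + |w i| = ∑ x ∈ T', |w x| :=
      Finset.sum_erase_add _ _ hi
    rw [Finset.sum_insert hjne] at hle
    linarith
  have hT'ne : T'.Nonempty := Finset.card_pos.mp (by omega)
  obtain ⟨i0, hi0T, hi0min⟩ := Finset.exists_min_image T' (fun i => |w i|) hT'ne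
  set t := |w i0| with htdef
  have ht0 : 0 < t := by
    rcases (abs_nonneg (w i0)).lt_or_eq with h | h
    · exact h
    · exfalso
      have hzero : ∀ j, j ∉ T' → w j = 0 := by
        intro j hj
        have h2 := hexch i0 hi0T j hj
        rw [← h] at h2
        exact abs_nonpos_iff.mp h2
      have h1 := hw T' (hT'card ▸ hm0k)
      have h2 : costJT G T'ᶜ w = 0 := by
        refine Finset.sum_eq_zero fun j hj => ?_
        rw [hzero j (Finset.mem_compl.mp hj), abs_zero, sm_zero hG]
      have h3 : (0:ℝ) ≤ costJT G T' w := Finset.sum_nonneg fun i _ => sm_nonneg hG _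
      rw [h2] at h1
      linarith
  set c := F t / G t with hcdef
  have hc : 0 < c := div_pos (sm_pos hF ht0) (sm_pos hG ht0)
  have hFup : ∀ i ∈ T', F |w i| ≤ c * G |w i| := by
    intro i hi
    have hti : t ≤ |w i| := hi0min i hi
    have hGpos : 0 < G |w i| := sm_pos hG (lt_of_lt_of_le ht0 hti)
    exact (div_le_iff₀ hGpos).mp (le_trans (hratio t |w i| ht0 hti) le_rfl)
  have hFlow : ∀ j, j ∉ T' → c * G |w j| ≤ F |w j| := by
    intro j hj
    rcases (abs_nonneg (w j)).lt_or_eq with h | h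
    · have hjt : |w j| ≤ t := hexch i0 hi0T j hj
      exact (le_div_iff₀ (sm_pos hG h)).mp (hratio |w j| t h hjt)
    · rw [← h, sm_zero hF, sm_zero hG, mul_zero]
  have hmain : costJT F T' w < costJT F T'ᶜ w := by
    have h1 : costJT F T' w ≤ c * costJT G T' w := by
      rw [costJT, costJT, Finset.mul_sum]
      exact Finset.sum_le_sum fun i hi => hFup i hi
    have h2 : costJT G T' w < costJT G T'ᶜ w := hw T' (hT'card ▸ hm0k)
    have h3 : c * costJT G T'ᶜ w ≤ costJT F T'ᶜ w := by
      rw [costJT, costJT, Finset.mul_sum]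
      exact Finset.sum_le_sum fun j hj => hFlow j (Finset.mem_compl.mp hj)
    nlinarith
  intro T hT
  have hTn : T.card ≤ n := le_trans (Finset.card_le_univ T) (by simp)
  have hTcard : T.card ≤ m0 := le_min hT hTn
  have hstep : costJT F T w ≤ costJT F T' w := by
    have hsplitT : costJT F T w = ∑ i ∈ T \ T', F |w i| + ∑ i ∈ T ∩ T', F |w i| := by
      rw [costJT, ← Finset.sum_union (Finset.disjoint_sdiff_inter T T'),
        Finset.sdiff_union_inter]
    have hsplitT' : costJT F T' w = ∑ i ∈ T' \ T, F |w i| + ∑ i ∈ T' ∩ T, F |w i| := by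
      rw [costJT, ← Finset.sum_union (Finset.disjoint_sdiff_inter T' T),
        Finset.sdiff_union_inter]
    have hinter : ∑ i ∈ T ∩ T', F |w i| = ∑ i ∈ T' ∩ T, F |w i| := by
      rw [Finset.inter_comm]
    have hcards : (T \ T').card ≤ (T' \ T).card := by
      have e1 := Finset.card_sdiff_add_card_inter T T'
      have e2 := Finset.card_sdiff_add_card_inter T' T
      rw [Finset.inter_comm] at e2
      omega
    have hkey : ∑ i ∈ T \ T', F |w i| ≤ ∑ i ∈ T' \ T, F |w i| := by
      rcases Finset.eq_empty_or_nonempty (T \ T') with h | h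
      · rw [h, Finset.sum_empty]
        exact Finset.sum_nonneg fun j _ => sm_nonneg hF _
      · have hT'Tne : (T' \ T).Nonempty := by
          rw [← Finset.card_pos]
          have := Finset.card_pos.mpr h
          omega
        obtain ⟨j0, hj0, hj0min⟩ := Finset.exists_min_image (T' \ T) (fun i => F |w i|) hT'Tne
        have hb : ∀ i ∈ T \ T', F |w i| ≤ F |w j0| := by
          intro i hi
          exact hFmono _ _ (abs_nonneg _)
            (hexch j0 (Finset.mem_sdiff.mp hj0).1 i (Finset.mem_sdiff.mp hi).2)
        calc ∑ i ∈ T \ T', F |w i| ≤ (T \ T').card • F |w j0| :=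
              Finset.sum_le_card_nsmul _ _ _ hb
          _ ≤ (T' \ T).card • F |w j0| := by
              rw [nsmul_eq_mul, nsmul_eq_mul]
              exact mul_le_mul_of_nonneg_right (Nat.cast_le.mpr hcards) (sm_nonneg hF _)
          _ ≤ ∑ i ∈ T' \ T, F |w i| := Finset.card_nsmul_le_sum _ _ _ hj0min
    linarith [hsplitT, hsplitT', hinter, hkey]
  have htotT : costJT F T w + costJT F Tᶜ w = costJ F w := by
    rw [costJT, costJT, costJ]; exact Finset.sum_add_sum_compl T _
  have htotT' : costJT F T' w + costJT F T'ᶜ w = costJ F w := by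
    rw [costJT, costJT, costJ]; exact Finset.sum_add_sum_compl T' _
  linarith

lemma euc_sub_apply {n : ℕ} (a b : EuclideanSpace ℝ (Fin n)) (i : Fin n) :
    (a - b) i = a i - b i := rfl

lemma euc_add_apply {n : ℕ} (a b : EuclideanSpace ℝ (Fin n)) (i : Fin n) :
    (a + b) i = a i + b i := rfl

lemma rrc_to_rnsp {m n : ℕ} (A : Matrix (Fin m) (Fin n) ℝ) (k : ℕ) {G : ℝ → ℝ}
    (hG : SparsenessMeasure G) {C : ℝ} (hC : 0 < C) (h : RRC A k G C) :
    RNSP A k G (1 / (2 * (1 + C * (‖mulVecCLM A‖ + 1)))) := by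
  set M := C * (‖mulVecCLM A‖ + 1) with hM
  have hMpos : 0 < M := mul_pos hC (by positivity)
  set d := 1 / (2 * (1 + M)) with hd
  have hdpos : 0 < d := by positivity
  intro z hz hz0 η hη T hT
  by_contra hcon
  push_neg at hcon
  set w := z + η with hwdef
  set xbar : EuclideanSpace ℝ (Fin n) := WithLp.toLp 2 (fun i => if i ∈ T then -(w i) else 0) with hxbar
  set xhat : EuclideanSpace ℝ (Fin n) := WithLp.toLp 2 (fun i => if i ∈ T then 0 else w i) with hxhat
  have hzpos : 0 < ‖z‖ := norm_pos_iff.mpr hz0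
  set ε := (‖mulVecCLM A‖ + 1) * (d * ‖z‖) with hε
  have hεpos : 0 < ε := by positivity
  have hsub : xhat - xbar = w := by
    ext i
    rw [euc_sub_apply]
    by_cases hi : i ∈ T <;> simp [hxhat, hxbar, hi]
  have hAz : mulVecCLM A z = 0 := hz
  have hsparse : Sparse k xbar := ⟨T, hT, fun i hi => by simp [hxbar, hi]⟩
  have hAbound : ‖mulVecCLM A xhat - (mulVecCLM A xbar + 0)‖ ≤ ε := by
    rw [add_zero, ← map_sub, hsub, hwdef, map_add, hAz, zero_add]
    calc ‖mulVecCLM A η‖ ≤ ‖mulVecCLM A‖ * ‖η‖ := (mulVecCLM A).le_opNorm η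
      _ ≤ ‖mulVecCLM A‖ * (d * ‖z‖) :=
          mul_le_mul_of_nonneg_left hη.le (norm_nonneg _)
      _ ≤ ε := by
          rw [hε]
          have : (0:ℝ) ≤ d * ‖z‖ := by positivity
          nlinarith [norm_nonneg (mulVecCLM A)]
  have hch : costJ G xhat = costJT G Tᶜ w := by
    rw [costJ, costJT, ← Finset.sum_add_sum_compl T]
    have h1 : ∑ i ∈ T, G |xhat i| = 0 :=
      Finset.sum_eq_zero fun i hi => by simp [hxhat, hi, sm_zero hG]
    have h2 : ∑ i ∈ Tᶜ, G |xhat i| = ∑ i ∈ Tᶜ, G |w i| :=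
      Finset.sum_congr rfl fun i hi => by simp [hxhat, Finset.mem_compl.mp hi]
    rw [h1, h2, zero_add]
  have hcb : costJ G xbar = costJT G T w := by
    rw [costJ, costJT, ← Finset.sum_add_sum_compl T]
    have h1 : ∑ i ∈ T, G |xbar i| = ∑ i ∈ T, G |w i| :=
      Finset.sum_congr rfl fun i hi => by simp [hxbar, hi]
    have h2 : ∑ i ∈ Tᶜ, G |xbar i| = 0 :=
      Finset.sum_eq_zero fun i hi => by simp [hxbar, Finset.mem_compl.mp hi, sm_zero hG]
    rw [h1, h2, add_zero]
  have hcost : costJ G xhat ≤ costJ G xbar := by rw [hch, hcb]; exact hcon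
  have hrec := h xbar hsparse ε hεpos 0 (by simp [hεpos.le]) xhat hAbound hcost
  have hnw : ‖xbar - xhat‖ = ‖w‖ := by rw [norm_sub_rev, hsub]
  have hwlow : ‖z‖ - d * ‖z‖ ≤ ‖w‖ := by
    have := norm_sub_norm_le z (-η)
    have h2 : z - -η = w := by rw [hwdef]; abel
    rw [h2, norm_neg] at this
    linarith [hη.le]
  have hCε : C * ε = M * (d * ‖z‖) := by rw [hε, hM]; ring
  have hhalf : d * (1 + M) = 1 / 2 := by
    rw [hd]; field_simp
  rw [hnw] at hrec
  rw [hCε] at hrec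
  nlinarith [hzpos, hMpos, hdpos]

lemma rnsp_to_rrc {m n : ℕ} (A : Matrix (Fin m) (Fin n) ℝ) (k : ℕ) {F : ℝ → ℝ}
    (hF : SparsenessMeasure F) {d : ℝ} (hd : 0 < d) (h : RNSP A k F d) :
    ∃ C > 0, RRC A k F C := by
  classical
  set K := LinearMap.ker (mulVecCLM A : EuclideanSpace ℝ (Fin n) →ₗ[ℝ] EuclideanSpace ℝ (Fin m)) with hK
  set g : Kᗮ →ₗ[ℝ] EuclideanSpace ℝ (Fin m) :=
    ((mulVecCLM A : EuclideanSpace ℝ (Fin n) →ₗ[ℝ] EuclideanSpace ℝ (Fin m)).comp Kᗮ.subtype)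
    with hg
  have hginj : Function.Injective g := by
    rw [← LinearMap.ker_eq_bot, Submodule.eq_bot_iff]
    intro x hx
    have hx' : g x = 0 := hx
    have h1 : (x : EuclideanSpace ℝ (Fin n)) ∈ K := LinearMap.mem_ker.mpr hx'
    have h2 : (x : EuclideanSpace ℝ (Fin n)) ∈ Kᗮ := x.2
    have h3 : (x : EuclideanSpace ℝ (Fin n)) = 0 :=
      Submodule.mem_bot ℝ |>.mp (K.orthogonal_disjoint.le_bot ⟨h1, h2⟩)
    exact Subtype.ext h3
  obtain ⟨c, hc0, hcanti⟩ := (LinearMap.injective_iff_antilipschitz g).mp hginj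
  have hbound : ∀ x : Kᗮ, ‖(x : EuclideanSpace ℝ (Fin n))‖ ≤ c * ‖mulVecCLM A x‖ := by
    intro x
    have h1 := hcanti.le_mul_dist x 0
    rw [map_zero, dist_zero_right, dist_zero_right] at h1
    exact h1
  refine ⟨2 * c * (1 + 1 / d) + 1, by positivity, ?_⟩
  intro xbar hsp ε hε v hv xhat hfeas hcost
  obtain ⟨T, hTcard, hTsupp⟩ := hsp
  set u := xhat - xbar with hu
  have hAu : ‖mulVecCLM A u‖ ≤ 2 * ε := by
    have h1 : mulVecCLM A u = (mulVecCLM A xhat - (mulVecCLM A xbar + v)) + v := by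
      rw [hu, map_sub]; abel
    rw [h1]
    calc ‖(mulVecCLM A xhat - (mulVecCLM A xbar + v)) + v‖
        ≤ ‖mulVecCLM A xhat - (mulVecCLM A xbar + v)‖ + ‖v‖ := norm_add_le _ _
      _ ≤ ε + ε := add_le_add hfeas hv
      _ = 2 * ε := by ring
  set z : EuclideanSpace ℝ (Fin n) := (K.orthogonalProjectionOnto u : EuclideanSpace ℝ (Fin n))
    with hz
  set η := u - z with hη
  have hzK : z ∈ K := (K.orthogonalProjectionOnto u).2
  have hηK : η ∈ Kᗮ := K.sub_starProjection_mem_orthogonal u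
  have huzη : u = z + η := by rw [hη]; abel
  have hAη : mulVecCLM A η = mulVecCLM A u := by
    have hAz : mulVecCLM A z = 0 := hzK
    rw [hη, map_sub, hAz, sub_zero]
  have hηnorm : ‖η‖ ≤ c * (2 * ε) := by
    have h1 := hbound ⟨η, hηK⟩
    simp only [Submodule.coe_mk] at h1
    calc ‖η‖ ≤ c * ‖mulVecCLM A η‖ := h1
      _ = c * ‖mulVecCLM A u‖ := by rw [hAη]
      _ ≤ c * (2 * ε) := mul_le_mul_of_nonneg_left hAu c.coe_nonneg
  -- cost inequality
  have hJ : costJT F Tᶜ u ≤ costJT F T u := by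
    have e1 : costJ F xhat = ∑ i ∈ T, F |xbar i + u i| + costJT F Tᶜ u := by
      rw [costJ, costJT, ← Finset.sum_add_sum_compl T]
      congr 1
      · refine Finset.sum_congr rfl fun i _ => ?_
        rw [hu, euc_sub_apply]; ring_nf
      · refine Finset.sum_congr rfl fun i hi => ?_
        rw [hu, euc_sub_apply, hTsupp i (Finset.mem_compl.mp hi), sub_zero]
    have e2 : costJ F xbar = ∑ i ∈ T, F |xbar i| := by
      rw [costJ, ← Finset.sum_add_sum_compl T]
      have h2 : ∑ i ∈ Tᶜ, F |xbar i| = 0 :=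
        Finset.sum_eq_zero fun i hi => by
          rw [hTsupp i (Finset.mem_compl.mp hi), abs_zero, sm_zero hF]
      rw [h2, add_zero]
    have e3 : ∑ i ∈ T, F |xbar i| ≤ ∑ i ∈ T, F |xbar i + u i| + costJT F T u := by
      rw [costJT, ← Finset.sum_add_distrib]
      refine Finset.sum_le_sum fun i _ => ?_
      have h3 := hF.2.2 (xbar i + u i) (-(u i))
      rw [add_neg_cancel_right, abs_neg] at h3
      exact h3
    rw [e1] at hcost
    rw [e2] at hcost
    linarith
  have hnorm_eq : ‖xbar - xhat‖ = ‖u‖ := by rw [hu, norm_sub_rev]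
  clear_value η z u
  clear hAu hAη hη hz hu
  rcases eq_or_ne z 0 with hz0 | hz0
  · have huη : u = η := by rw [huzη, hz0, zero_add]
    rw [hnorm_eq, huη]
    have hc' : (0:ℝ) ≤ (c:ℝ) := c.coe_nonneg
    have h1 : (0:ℝ) < 1 / d := by positivity
    have h2 : (c:ℝ) * (2 * ε) ≤ (2 * c * (1 + 1 / d) + 1) * ε := by
      nlinarith [mul_nonneg (mul_nonneg hc' h1.le) hε.le]
    linarith [hηnorm]
  · have hηz : d * ‖z‖ ≤ ‖η‖ := by
      by_contra hcon
      push_neg at hcon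
      have := h z hzK hz0 η hcon T hTcard
      rw [← huzη] at this
      linarith
    have hzle : ‖z‖ ≤ ‖η‖ / d := by
      rw [le_div_iff₀ hd]
      linarith [hηz]
    have hule : ‖u‖ ≤ (1 + 1 / d) * ‖η‖ := by
      have h1 : ‖u‖ ≤ ‖z‖ + ‖η‖ := by rw [huzη]; exact norm_add_le _ _
      have h2 : (1 + 1 / d) * ‖η‖ = ‖η‖ + ‖η‖ / d := by field_simp
      rw [h2]
      linarith
    rw [hnorm_eq]
    have hc' : (0:ℝ) ≤ (c:ℝ) := c.coe_nonneg
    have h1 : (0:ℝ) < 1 / d := by positivity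
    have h2 : (1 + 1 / d) * ‖η‖ ≤ (1 + 1 / d) * ((c:ℝ) * (2 * ε)) :=
      mul_le_mul_of_nonneg_left hηnorm (by positivity)
    have h3 : (1 + 1 / d) * ((c:ℝ) * (2 * ε)) ≤ (2 * c * (1 + 1 / d) + 1) * ε := by
      nlinarith [hε]
    linarith [hule]

/-- Lemma 9, comparison of sparseness measures: if `F, G` are
non-decreasing sparseness measures and `F/G` is non-increasing on `(0,∞)`, then
(i) NSP for `J_G` implies NSP for `J_F` (for any subspace), and (ii) RRC for `J_G`
implies RRC for `J_F` (for any matrix, with some constants). -/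
theorem stmt14 {n : ℕ} (F G : ℝ → ℝ)
    (hF : SparsenessMeasure F) (hG : SparsenessMeasure G)
    (hFmono : ∀ s t : ℝ, 0 ≤ s → s ≤ t → F s ≤ F t)
    (hGmono : ∀ s t : ℝ, 0 ≤ s → s ≤ t → G s ≤ G t)
    (hratio : ∀ s t : ℝ, 0 < s → s ≤ t → F t / G t ≤ F s / G s)
    (k : ℕ) (hk : 1 ≤ k) :
    (∀ ν : Submodule ℝ (EuclideanSpace ℝ (Fin n)), NSP ν k G → NSP ν k F) ∧
    (∀ m : ℕ, ∀ A : Matrix (Fin m) (Fin n) ℝ,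
      (∃ C > 0, RRC A k G C) → (∃ C > 0, RRC A k F C)) := by
  constructor
  · intro ν hNSP z hz hz0
    exact keyLemma hF hG hFmono hratio hk z (fun T hT => hNSP z hz hz0 T hT)
  · rintro m A ⟨C, hC, hRRC⟩
    have h1 := rrc_to_rnsp A k hG hC hRRC
    set d := 1 / (2 * (1 + C * (‖mulVecCLM A‖ + 1))) with hd
    have hM : 0 < C * (‖mulVecCLM A‖ + 1) := mul_pos hC (by positivity)
    have hdpos : 0 < d := by
      rw [hd]
      apply div_pos one_pos
      linarith
    have h2 : RNSP A k F d := fun z hz hz0 η hη T hT =>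
      keyLemma hF hG hFmono hratio hk (z + η) (fun T' hT' => h1 z hz hz0 η hη T' hT') T hT
    exact rnsp_to_rrc A k hF hdpos h2
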